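/- Under assumption (GT): for every η₁ > 0, taking B as in (GT), for all integers 0 ≤ m < n and all x ∈ ℝ one has the upper pointwise bound F̄_n^m(x) ≤ Q_m(F̄_n^{m+1}(x − B)) + η₁, where Q_m(u) = ∑_{k≥1} p_{m,k}·(1 − (1−u)^k). -/

import Mathlib

open MeasureTheory Set Filter

/-- Under assumption (GT): for every `η₁ > 0`, taking `B` as in (GT),
for all `0 ≤ m < n` and all `x` one has the upper pointwise bound
`F̄_n^m(x) ≤ Q_m(F̄_n^{m+1}(x − B)) + η₁`, where
`Q_m(u) = ∑_{k≥1} p_{m,k}·(1 − (1−u)^k)`. -/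
theorem stmt_5
    (p : ℕ → ℕ → ℝ)
    (G : (n : ℕ) → (k : ℕ) → Measure (Fin k → ℝ))
    (g : ℕ → ℕ → Measure ℝ)
    (hp0 : ∀ n, p n 0 = 0)
    (hpnonneg : ∀ n k, 0 ≤ p n k)
    (hpsum : ∀ n, HasSum (p n) 1)
    (hpmean : ∀ n, Summable (fun k : ℕ => (k : ℝ) * p n k))
    (hGprob : ∀ n k, IsProbabilityMeasure (G n k))
    (hgprob : ∀ n k, IsProbabilityMeasure (g n k))
    (hmarg : ∀ n k (i : Fin k), (G n k).map (fun y => y i) = g n k)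
    (F : ℕ → ℕ → ℝ → ℝ)
    (hF01 : ∀ n m, m ≤ n → ∀ x, F n m x ∈ Icc (0 : ℝ) 1)
    (hFanti : ∀ n m, m ≤ n → Antitone (F n m))
    (hFrc : ∀ n m, m ≤ n → ∀ x, ContinuousWithinAt (F n m) (Ici x) x)
    (hFn1 : ∀ n (x : ℝ), x < 0 → F n n x = 1)
    (hFn0 : ∀ n (x : ℝ), 0 ≤ x → F n n x = 0)
    (hrec : ∀ n m, m < n → ∀ x : ℝ,
      F n m x = 1 - ∑' k : ℕ, p m k *
        ∫ y : Fin k → ℝ, (∏ i, (1 - F n (m + 1) (x - y i))) ∂(G m k))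
    -- `B` as provided by assumption (GT) for the given `η₁`
    (η₁ : ℝ) (hη₁ : 0 < η₁) (B : ℝ) (hB : 0 < B)
    (hGT : ∀ n k, p n k ≠ 0 →
      1 - η₁ ≤ ((G n k) {y | ∀ i, y i ≤ B}).toReal ∧
      1 - η₁ ≤ ((G n k) {y | ∀ i, -B ≤ y i}).toReal)
    (n m : ℕ) (hmn : m < n) (x : ℝ) :
    F n m x ≤ (∑' k : ℕ, p m k * (1 - (1 - F n (m + 1) (x - B)) ^ k)) + η₁ := by
  have hmn' : m + 1 ≤ n := hmn
  set u : ℝ := F n (m + 1) (x - B) with hu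
  have hu0 : 0 ≤ u := (hF01 n (m+1) hmn' _).1
  have hu1 : u ≤ 1 := (hF01 n (m+1) hmn' _).2
  have hvk : ∀ k : ℕ, 0 ≤ (1 - u) ^ k ∧ (1 - u) ^ k ≤ 1 := fun k =>
    ⟨pow_nonneg (by linarith) k, pow_le_one₀ (by linarith) (by linarith)⟩
  have hFmeas : Measurable (F n (m+1)) := (hFanti n (m+1) hmn').measurable
  -- integrand properties
  have hf01 : ∀ (k : ℕ) (y : Fin k → ℝ),
      (0 : ℝ) ≤ ∏ i, (1 - F n (m+1) (x - y i)) ∧ (∏ i, (1 - F n (m+1) (x - y i))) ≤ 1 := by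
    intro k y
    constructor
    · exact Finset.prod_nonneg fun i _ => by have := (hF01 n (m+1) hmn' (x - y i)).2; linarith
    · exact Finset.prod_le_one
        (fun i _ => by have := (hF01 n (m+1) hmn' (x - y i)).2; linarith)
        (fun i _ => by have := (hF01 n (m+1) hmn' (x - y i)).1; linarith)
  have hfmeas : ∀ k : ℕ, Measurable (fun y : Fin k → ℝ => ∏ i, (1 - F n (m+1) (x - y i))) := by
    intro k
    exact Finset.measurable_prod _ fun i _ =>
      measurable_const.sub (hFmeas.comp (measurable_const.sub (measurable_pi_apply i)))
  have hfint : ∀ k : ℕ, Integrable (fun y : Fin k → ℝ => ∏ i, (1 - F n (m+1) (x - y i))) (G m k) := by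
    intro k
    have := hGprob m k
    refine (integrable_const (1 : ℝ)).mono' (hfmeas k).aestronglyMeasurable ?_
    filter_upwards with y
    rw [Real.norm_eq_abs, abs_le]
    exact ⟨by linarith [(hf01 k y).1], (hf01 k y).2⟩
  have hint01 : ∀ k : ℕ,
      0 ≤ (∫ y : Fin k → ℝ, ∏ i, (1 - F n (m+1) (x - y i)) ∂(G m k)) ∧
      (∫ y : Fin k → ℝ, ∏ i, (1 - F n (m+1) (x - y i)) ∂(G m k)) ≤ 1 := by
    intro k
    have := hGprob m k
    constructor
    · exact integral_nonneg fun y => (hf01 k y).1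
    · calc (∫ y : Fin k → ℝ, ∏ i, (1 - F n (m+1) (x - y i)) ∂(G m k))
          ≤ ∫ _ : Fin k → ℝ, (1:ℝ) ∂(G m k) :=
            integral_mono (hfint k) (integrable_const 1) fun y => (hf01 k y).2
        _ = 1 := by simp
  -- key lower bound on the integral
  have key : ∀ k : ℕ, p m k ≠ 0 →
      (1 - u) ^ k * (1 - η₁) ≤ ∫ y : Fin k → ℝ, ∏ i, (1 - F n (m+1) (x - y i)) ∂(G m k) := by
    intro k hk
    have := hGprob m k
    set S : Set (Fin k → ℝ) := {y | ∀ i, y i ≤ B} with hSdef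
    have hS : MeasurableSet S := by
      have : S = ⋂ i, {y : Fin k → ℝ | y i ≤ B} := by ext y; simp [hSdef]
      rw [this]
      exact MeasurableSet.iInter fun i => measurableSet_le (measurable_pi_apply i) measurable_const
    have h1 : (1 - u) ^ k * (1 - η₁) ≤ (1 - u) ^ k * ((G m k) S).toReal :=
      mul_le_mul_of_nonneg_left (hGT m k hk).1 (hvk k).1
    have h2 : (1 - u) ^ k * ((G m k) S).toReal = ∫ _ in S, (1 - u) ^ k ∂(G m k) := by
      rw [setIntegral_const]; rw [smul_eq_mul]; rw [measureReal_def]; ring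
    have h3 : (∫ _ in S, (1 - u) ^ k ∂(G m k)) ≤
        ∫ y in S, ∏ i, (1 - F n (m+1) (x - y i)) ∂(G m k) := by
      refine setIntegral_mono_on (integrableOn_const (measure_lt_top _ _).ne)
        (hfint k).integrableOn hS ?_
      intro y hy
      have : (1 - u) ^ k = ∏ _i : Fin k, (1 - u) := by simp
      rw [this]
      refine Finset.prod_le_prod (fun i _ => by linarith) ?_
      intro i _
      have hyi : y i ≤ B := hy i
      have : F n (m+1) (x - y i) ≤ u := hFanti n (m+1) hmn' (by linarith : x - B ≤ x - y i)
      linarith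
    have h4 : (∫ y in S, ∏ i, (1 - F n (m+1) (x - y i)) ∂(G m k)) ≤
        ∫ y, ∏ i, (1 - F n (m+1) (x - y i)) ∂(G m k) :=
      setIntegral_le_integral (hfint k) (Filter.Eventually.of_forall fun y => (hf01 k y).1)
    linarith
  -- summabilities
  have hpS : Summable (p m) := (hpsum m).summable
  have hsumI : Summable (fun k : ℕ => p m k *
      ∫ y : Fin k → ℝ, ∏ i, (1 - F n (m+1) (x - y i)) ∂(G m k)) := by
    refine Summable.of_nonneg_of_le
      (fun k => mul_nonneg (hpnonneg m k) (hint01 k).1)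
      (fun k => ?_) hpS
    calc p m k * _ ≤ p m k * 1 := mul_le_mul_of_nonneg_left (hint01 k).2 (hpnonneg m k)
      _ = p m k := mul_one _
  have hsumT : Summable (fun k : ℕ => p m k * (1 - u) ^ k) :=
    Summable.of_nonneg_of_le (fun k => mul_nonneg (hpnonneg m k) (hvk k).1)
      (fun k => by
        calc p m k * (1 - u) ^ k ≤ p m k * 1 := mul_le_mul_of_nonneg_left (hvk k).2 (hpnonneg m k)
          _ = p m k := mul_one _) hpS
  have hsumQ : Summable (fun k : ℕ => p m k * (1 - (1 - u) ^ k)) :=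
    Summable.of_nonneg_of_le
      (fun k => mul_nonneg (hpnonneg m k) (by linarith [(hvk k).2]))
      (fun k => by
        calc p m k * (1 - (1 - u) ^ k) ≤ p m k * 1 :=
          mul_le_mul_of_nonneg_left (by linarith [(hvk k).1]) (hpnonneg m k)
          _ = p m k := mul_one _) hpS
  set T : ℝ := ∑' k : ℕ, p m k * (1 - u) ^ k with hT
  have hT1 : T ≤ 1 := by
    have h := Summable.tsum_le_tsum (f := fun k : ℕ => p m k * (1 - u) ^ k) (g := p m)
      (fun k => ?_) hsumT hpS
    · rw [(hpsum m).tsum_eq] at h; exact h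
    calc p m k * (1 - u) ^ k ≤ p m k * 1 := mul_le_mul_of_nonneg_left (hvk k).2 (hpnonneg m k)
      _ = p m k := mul_one _
  have hT0 : 0 ≤ T := tsum_nonneg fun k => mul_nonneg (hpnonneg m k) (hvk k).1
  -- comparison of tsums
  have hcmp : T * (1 - η₁) ≤ ∑' k : ℕ, p m k *
      ∫ y : Fin k → ℝ, ∏ i, (1 - F n (m+1) (x - y i)) ∂(G m k) := by
    rw [hT, ← tsum_mul_right]
    refine Summable.tsum_le_tsum (fun k => ?_) (hsumT.mul_right _) hsumI
    by_cases hk : p m k = 0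
    · simp [hk]
    · rw [mul_assoc]
      exact mul_le_mul_of_nonneg_left (key k hk) (hpnonneg m k)
  -- identify the RHS tsum
  have hQ : (∑' k : ℕ, p m k * (1 - (1 - u) ^ k)) = 1 - T := by
    have : ∀ k : ℕ, p m k * (1 - (1 - u) ^ k) = p m k - p m k * (1 - u) ^ k := fun k => by ring
    rw [tsum_congr this, Summable.tsum_sub hpS hsumT, (hpsum m).tsum_eq]
  rw [hrec n m hmn x, hQ]
  nlinarith [hcmp, hη₁.le, hT1]
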